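/- arXiv:1806.09702 — 2 statements merged into one kernel-verified Lean document; each statement's English description precedes it below -/
import Mathlib

section
/- For integers n > 3 and 3 ≤ k ≤ n, the quantity C(2n, k) - C(2n, k-2) is strictly greater than n(2n+1), where C denotes the binomial coefficient. -/
private lemma choose2' (N : ℕ) : N.choose 2 * 2 = N * (N - 1) := by
  have h := Nat.choose_succ_right_eq N 1
  simpa [Nat.choose_one_right] using h

private lemma choose3' (N : ℕ) : N.choose 3 * 6 = N * (N - 1) * (N - 2) := by
  have h := Nat.choose_succ_right_eq N 2
  have h2 := choose2' N
  calc N.choose 3 * 6 = (N.choose 3 * 3) * 2 := by ring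
    _ = (N.choose 2 * (N - 2)) * 2 := by rw [h]
    _ = (N.choose 2 * 2) * (N - 2) := by ring
    _ = N * (N - 1) * (N - 2) := by rw [h2]

private lemma choose4' (N : ℕ) : N.choose 4 * 24 = N * (N - 1) * (N - 2) * (N - 3) := by
  have h := Nat.choose_succ_right_eq N 3
  have h3 := choose3' N
  calc N.choose 4 * 24 = (N.choose 4 * 4) * 6 := by ring
    _ = (N.choose 3 * (N - 3)) * 6 := by rw [h]
    _ = (N.choose 3 * 6) * (N - 3) := by ring
    _ = N * (N - 1) * (N - 2) * (N - 3) := by rw [h3]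

private lemma choose_mono_left (n : ℕ) : ∀ j, j ≤ n → ∀ i, i ≤ j →
    (2 * n).choose i ≤ (2 * n).choose j := by
  intro j
  induction j with
  | zero =>
    intro _ i hi
    have : i = 0 := by omega
    simp [this]
  | succ j ih =>
    intro hjn i hi
    rcases Nat.lt_or_ge i (j + 1) with h | h
    · have h1 : (2 * n).choose i ≤ (2 * n).choose j := ih (by omega) i (by omega)
      have h2 : (2 * n).choose j ≤ (2 * n).choose (j + 1) :=
        Nat.choose_le_succ_of_lt_half_left (by omega)
      exact h1.trans h2
    · have : i = j + 1 := by omega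
      simp [this]

set_option maxHeartbeats 1600000 in
/-- For integers `n > 3` and `3 ≤ k ≤ n`, one has
`C(2n, k) - C(2n, k-2) > n(2n+1)`. -/
theorem dim_fundamental_rep_gt (n k : ℕ) (hn : 3 < n) (hk : 3 ≤ k) (hkn : k ≤ n) :
    Nat.choose (2 * n) k - Nat.choose (2 * n) (k - 2) > n * (2 * n + 1) := by
  obtain ⟨j, rfl⟩ : ∃ j, k = j + 2 := ⟨k - 2, by omega⟩
  obtain ⟨m, hm, hm1⟩ : ∃ m, n = j + 1 + m ∧ 1 ≤ m := ⟨n - j - 1, by omega, by omega⟩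
  subst hm
  have hj1 : 1 ≤ j := by omega
  simp only [Nat.add_sub_cancel]
  -- key identity
  have h1 := Nat.choose_succ_right_eq (2 * (j + 1 + m)) (j + 1)
  have h2 := Nat.choose_succ_right_eq (2 * (j + 1 + m)) j
  have hs1 : 2 * (j + 1 + m) - j = j + 2 + 2 * m := by omega
  have hs2 : 2 * (j + 1 + m) - (j + 1) = j + 1 + 2 * m := by omega
  rw [hs2] at h1
  rw [hs1] at h2
  have key : (2 * (j + 1 + m)).choose (j + 2) * ((j + 2) * (j + 1))
      = (2 * (j + 1 + m)).choose j * ((j + 2 + 2 * m) * (j + 1 + 2 * m)) := by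
    calc (2 * (j + 1 + m)).choose (j + 2) * ((j + 2) * (j + 1))
        = ((2 * (j + 1 + m)).choose (j + 1 + 1) * (j + 1 + 1)) * (j + 1) := by ring_nf
      _ = ((2 * (j + 1 + m)).choose (j + 1) * (j + 1 + 2 * m)) * (j + 1) := by rw [h1]
      _ = ((2 * (j + 1 + m)).choose (j + 1) * (j + 1)) * (j + 1 + 2 * m) := by ring
      _ = ((2 * (j + 1 + m)).choose j * (j + 2 + 2 * m)) * (j + 1 + 2 * m) := by rw [h2]
      _ = (2 * (j + 1 + m)).choose j * ((j + 2 + 2 * m) * (j + 1 + 2 * m)) := by ring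
  -- main inequality
  have hQ : (j + 1 + m) * ((j + 1) * (j + 2)) < 2 * m * ((2 * (j + 1 + m)).choose j) := by
    rcases Nat.lt_or_ge j 4 with hj4 | hj4
    · interval_cases j
      · -- j = 1
        rw [Nat.choose_one_right]
        nlinarith [hm1, hn]
      · -- j = 2
        have hav := choose2' (2 * (2 + 1 + m))
        have hr : 2 * (2 + 1 + m) - 1 = 2 * m + 5 := by omega
        rw [hr] at hav
        nlinarith [hav, hm1]
      · -- j = 3
        have hav := choose3' (2 * (3 + 1 + m))
        have hr1 : 2 * (3 + 1 + m) - 1 = 2 * m + 7 := by omega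
        have hr2 : 2 * (3 + 1 + m) - 2 = 2 * m + 6 := by omega
        rw [hr1, hr2] at hav
        apply Nat.lt_of_mul_lt_mul_right (a := 6)
        calc (3 + 1 + m) * ((3 + 1) * (3 + 2)) * 6 < m * (2 * (3 + 1 + m) * (2 * m + 7) * (2 * m + 6)) * 2 := by
              have hb : 5 * (9 * 8) ≤ (m + 4) * ((2 * m + 7) * (2 * m + 6)) :=
                Nat.mul_le_mul (by omega) (Nat.mul_le_mul (by omega) (by omega))
              have hbb := Nat.mul_le_mul_left (4 * m) hb
              nlinarith [hbb, hm1]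
          _ = m * ((2 * (3 + 1 + m)).choose 3 * 6) * 2 := by rw [hav]
          _ = 2 * m * ((2 * (3 + 1 + m)).choose 3) * 6 := by ring
    · -- j ≥ 4
      obtain ⟨i, rfl⟩ : ∃ i, j = i + 4 := ⟨j - 4, by omega⟩
      have hc : (2 * (i + 4 + 1 + m)).choose 4 ≤ (2 * (i + 4 + 1 + m)).choose (i + 4) :=
        choose_mono_left (i + 4 + 1 + m) (i + 4) (by omega) 4 (by omega)
      have e4 := choose4' (2 * (i + 4 + 1 + m))
      have hr1 : 2 * (i + 4 + 1 + m) - 1 = 2 * i + 2 * m + 9 := by omega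
      have hr2 : 2 * (i + 4 + 1 + m) - 2 = 2 * i + 2 * m + 8 := by omega
      have hr3 : 2 * (i + 4 + 1 + m) - 3 = 2 * i + 2 * m + 7 := by omega
      rw [hr1, hr2, hr3] at e4
      have hA : 3 * (i + m + 5) < (2 * i + 2 * m + 9) * (2 * i + 2 * m + 7) := by nlinarith
      apply Nat.lt_of_mul_lt_mul_right (a := 24)
      calc (i + 4 + 1 + m) * ((i + 4 + 1) * (i + 4 + 2)) * 24
          ≤ (i + 4 + 1 + m) * ((i + m + 4) * (i + m + 5)) * 24 := by
            apply Nat.mul_le_mul_right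
            exact Nat.mul_le_mul_left _ (Nat.mul_le_mul (by omega) (by omega))
        _ = (3 * (i + m + 5)) * (8 * ((i + m + 4) * (i + m + 5))) := by ring
        _ < ((2 * i + 2 * m + 9) * (2 * i + 2 * m + 7)) * (8 * ((i + m + 4) * (i + m + 5))) := by
            exact Nat.mul_lt_mul_of_lt_of_le hA (le_refl _) (by positivity)
        _ = 2 * (2 * (i + 4 + 1 + m) * (2 * i + 2 * m + 9) * (2 * i + 2 * m + 8) * (2 * i + 2 * m + 7)) := by
            ring
        _ = 2 * ((2 * (i + 4 + 1 + m)).choose 4 * 24) := by rw [e4]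
        _ = 2 * 1 * ((2 * (i + 4 + 1 + m)).choose 4) * 24 := by ring
        _ ≤ 2 * m * ((2 * (i + 4 + 1 + m)).choose (i + 4)) * 24 := by
            apply Nat.mul_le_mul_right
            exact Nat.mul_le_mul (Nat.mul_le_mul_left _ hm1) hc
  -- finish: multiply through by (j+2)*(j+1)
  have hgoal : (j + 1 + m) * (2 * (j + 1 + m) + 1) + (2 * (j + 1 + m)).choose j
      < (2 * (j + 1 + m)).choose (j + 2) := by
    apply Nat.lt_of_mul_lt_mul_right (a := (j + 2) * (j + 1))
    rw [key]
    have h5 : (j + 1 + m) * ((j + 1) * (j + 2)) * (2 * j + 2 * m + 3)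
        < 2 * m * ((2 * (j + 1 + m)).choose j) * (2 * j + 2 * m + 3) :=
      Nat.mul_lt_mul_of_lt_of_le hQ (le_refl _) (by omega)
    calc ((j + 1 + m) * (2 * (j + 1 + m) + 1) + (2 * (j + 1 + m)).choose j) * ((j + 2) * (j + 1))
        = (j + 1 + m) * ((j + 1) * (j + 2)) * (2 * j + 2 * m + 3)
          + (2 * (j + 1 + m)).choose j * ((j + 2) * (j + 1)) := by ring
      _ < 2 * m * ((2 * (j + 1 + m)).choose j) * (2 * j + 2 * m + 3)
          + (2 * (j + 1 + m)).choose j * ((j + 2) * (j + 1)) := Nat.add_lt_add_right h5 _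
      _ = (2 * (j + 1 + m)).choose j * ((j + 2 + 2 * m) * (j + 1 + 2 * m)) := by ring
  exact Nat.lt_sub_of_add_lt hgoal
end

section
/- Let h = g ⊕ k ⊕ V be a Lie algebra with g, k subalgebras and V a subspace with [V,V] ⊆ g ⊕ k, and write Ω_g, Ω_k : Λ²V → g, k for the two components of the bracket restricted to V. For real parameters r, s define a new anticommutative product on g ⊕ k ⊕ V agreeing with the original bracket except that the bracket of two elements of V is r·Ω_g + s·Ω_k. If there exist X, Y, Z ∈ V with the g-component Jacobiator Ω_g(X,Y,Z) := Ω_g(X,Y)·Z + Ω_g(Z,X)·Y + Ω_g(Y,Z)·X nonzero (where g acts on V by the original bracket), then the deformed product satisfies the Jacobi identity if and only if r = s. -/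
/-- Let `h = g ⊕ k ⊕ V` be a Lie algebra (given by projections `πg, πk, πv`) with
`g ⊕ k` a subalgebra normalizing `V` and `[V,V] ⊆ g ⊕ k`. Deform the bracket so that
on `V × V` it becomes `r·Ω_g + s·Ω_k`. If some triple in `V` has nonzero `g`-component
Jacobiator, then the deformed product satisfies the Jacobi identity iff `r = s`. -/
theorem deformed_bracket_jacobi_iff
    {h : Type*} [LieRing h] [LieAlgebra ℝ h]
    (πg πk πv : h →ₗ[ℝ] h)
    (hsum : πg + πk + πv = LinearMap.id)
    (hgg : πg ∘ₗ πg = πg) (hkk : πk ∘ₗ πk = πk) (hvv : πv ∘ₗ πv = πv)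
    (hgk : πg ∘ₗ πk = 0) (hgv : πg ∘ₗ πv = 0) (hkg : πk ∘ₗ πg = 0)
    (hkv : πk ∘ₗ πv = 0) (hvg : πv ∘ₗ πg = 0) (hvk : πv ∘ₗ πk = 0)
    -- `g ⊕ k` is a subalgebra:
    (hsub : ∀ a b : h, πv ⁅a - πv a, b - πv b⁆ = 0)
    -- `g ⊕ k` normalizes `V`:
    (hnorm : ∀ a b : h, πv ⁅a - πv a, πv b⁆ = ⁅a - πv a, πv b⁆)
    -- `[V, V] ⊆ g ⊕ k`:
    (hVV : ∀ a b : h, πv ⁅πv a, πv b⁆ = 0)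
    (r s : ℝ)
    (B : h → h → h)
    (hB : ∀ a b : h, B a b
      = ⁅a, b⁆ - ⁅πv a, πv b⁆ + r • πg ⁅πv a, πv b⁆ + s • πk ⁅πv a, πv b⁆)
    -- some triple in `V` has nonzero `g`-component Jacobiator:
    (hΩ : ∃ X Y Z : h, πv X = X ∧ πv Y = Y ∧ πv Z = Z ∧
      ⁅πg ⁅X, Y⁆, Z⁆ + ⁅πg ⁅Z, X⁆, Y⁆ + ⁅πg ⁅Y, Z⁆, X⁆ ≠ 0) :
    (∀ a b c : h, B (B a b) c + B (B c a) b + B (B b c) a = 0) ↔ r = s := by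
  have hsum' : ∀ x : h, πg x + πk x + πv x = x := fun x => by
    simpa using LinearMap.congr_fun hsum x
  have hvg' : ∀ x : h, πv (πg x) = 0 := fun x => by
    simpa using LinearMap.congr_fun hvg x
  have hvk' : ∀ x : h, πv (πk x) = 0 := fun x => by
    simpa using LinearMap.congr_fun hvk x
  have jac : ∀ x y z : h, ⁅⁅x, y⁆, z⁆ + ⁅⁅z, x⁆, y⁆ + ⁅⁅y, z⁆, x⁆ = 0 := by
    intro x y z
    have hj := lie_jacobi x y z
    have e1 : (⁅⁅x, y⁆, z⁆ : h) = -⁅z, ⁅x, y⁆⁆ := (lie_skew _ _).symm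
    have e2 : (⁅⁅z, x⁆, y⁆ : h) = -⁅y, ⁅z, x⁆⁆ := (lie_skew _ _).symm
    have e3 : (⁅⁅y, z⁆, x⁆ : h) = -⁅x, ⁅y, z⁆⁆ := (lie_skew _ _).symm
    rw [e1, e2, e3]
    calc -⁅z, ⁅x, y⁆⁆ + -⁅y, ⁅z, x⁆⁆ + -⁅x, ⁅y, z⁆⁆
        = -(⁅x, ⁅y, z⁆⁆ + ⁅y, ⁅z, x⁆⁆ + ⁅z, ⁅x, y⁆⁆) := by abel
      _ = -(0 : h) := by rw [hj]
      _ = 0 := neg_zero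
  constructor
  · intro hJ
    obtain ⟨X, Y, Z, hX, hY, hZ, hne⟩ := hΩ
    have hv0 : ∀ U W : h, πv U = U → πv W = W → πv ⁅U, W⁆ = 0 := by
      intro U W hU hW
      have := hVV U W
      rwa [hU, hW] at this
    have hBk : ∀ U W : h, πv U = U → πv W = W →
        B U W = r • πg ⁅U, W⁆ + s • πk ⁅U, W⁆ := by
      intro U W hU hW
      rw [hB, hU, hW]; abel
    have hBB : ∀ U W T : h, πv U = U → πv W = W → πv T = T →
        B (B U W) T = r • ⁅πg ⁅U, W⁆, T⁆ + s • ⁅πk ⁅U, W⁆, T⁆ := by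
      intro U W T hU hW hT
      rw [hB, hBk U W hU hW]
      have hz : πv (r • πg ⁅U, W⁆ + s • πk ⁅U, W⁆) = 0 := by
        simp [map_add, map_smul, hvg', hvk']
      rw [hz]
      simp [add_lie, smul_lie]
    have hkw : ∀ U W : h, πv U = U → πv W = W →
        πk ⁅U, W⁆ = ⁅U, W⁆ - πg ⁅U, W⁆ := by
      intro U W hU hW
      have h1 := hsum' ⁅U, W⁆
      rw [hv0 U W hU hW, add_zero] at h1
      exact eq_sub_of_add_eq' h1
    have hkey := hJ X Y Z
    rw [hBB X Y Z hX hY hZ, hBB Z X Y hZ hX hY, hBB Y Z X hY hZ hX,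
      hkw X Y hX hY, hkw Z X hZ hX, hkw Y Z hY hZ] at hkey
    have hj := jac X Y Z
    simp only [sub_lie] at hkey
    have hfin : (r - s) • (⁅πg ⁅X, Y⁆, Z⁆ + ⁅πg ⁅Z, X⁆, Y⁆ + ⁅πg ⁅Y, Z⁆, X⁆) = 0 := by
      linear_combination (norm := module) hkey - s • hj
    rcases smul_eq_zero.mp hfin with h0 | h0
    · linarith [sub_eq_zero.mp h0]
    · exact absurd h0 hne
  · intro hrs a b c
    subst hrs
    have hB' : ∀ x y : h, B x y = ⁅x, y⁆ + (r - 1) • ⁅πv x, πv y⁆ := by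
      intro x y
      rw [hB]
      have h1 := hsum' ⁅πv x, πv y⁆
      rw [hVV x y, add_zero] at h1
      linear_combination (norm := module) r • h1
    have hπvB : ∀ x y : h, πv (B x y) = πv ⁅x, y⁆ := by
      intro x y
      rw [hB']
      simp [map_add, map_smul, hVV]
    have hvlie : ∀ x y : h, πv ⁅x, y⁆ = ⁅x - πv x, πv y⁆ + ⁅πv x, y - πv y⁆ := by
      intro x y
      have hd : (⁅x, y⁆ : h) = ⁅x - πv x, y - πv y⁆ + ⁅x - πv x, πv y⁆
          + ⁅πv x, y - πv y⁆ + ⁅πv x, πv y⁆ := by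
        simp only [sub_lie, lie_sub]; abel
      have h3 : πv ⁅πv x, y - πv y⁆ = ⁅πv x, y - πv y⁆ := by
        have h4 : (⁅πv x, y - πv y⁆ : h) = -⁅y - πv y, πv x⁆ := (lie_skew _ _).symm
        rw [h4, map_neg, hnorm y x]
      rw [hd, map_add, map_add, map_add, hsub x y, hnorm x y, h3, hVV x y]
      abel
    have expand : ∀ x y z : h, B (B x y) z = ⁅⁅x, y⁆, z⁆
        + (r - 1) • ⁅⁅πv x, πv y⁆, z⁆ + (r - 1) • ⁅πv ⁅x, y⁆, πv z⁆ := by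
      intro x y z
      rw [hB' (B x y) z, hπvB x y, hB' x y]
      simp only [add_lie, smul_lie]
    rw [expand a b c, expand c a b, expand b c a, hvlie a b, hvlie c a, hvlie b c]
    have hj0 := jac a b c
    have j1 := jac (πv a) (πv b) (πv c)
    have j2 := jac (a - πv a) (πv b) (πv c)
    have j3 := jac (b - πv b) (πv c) (πv a)
    have j4 := jac (c - πv c) (πv a) (πv b)
    simp only [sub_lie, lie_sub, add_lie, lie_add] at j2 j3 j4 ⊢
    linear_combination (norm := module) hj0 + (r - 1) • (j1 + j2 + j3 + j4)
end
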